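/- Block step correctness of CUP: suppose A = [[A1],[A2]] with A1 = C1·[U1 V1]·P1 where C1 is k×r1 column echelon of full column rank, U1 r1×r1 unit upper triangular. Write A2·P1ᵀ = [A21 A22] with A21 of width r1, and set G = A21·U1⁻¹, H = A22 − G·V1. If H = C2·U2·P2 is a CUP decomposition of H, then A = C·U·P is a CUP decomposition of A where C = [[C1, 0],[G, C2]] (columns permuted into echelon form), U = [[U1, V1·P2ᵀ],[0, U2]] embedded as unit upper triangular, and P = diag(I_{r1}, P2)·P1. -/

import Mathlib

open Matrix

/-- `C` is in column echelon form. -/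
def IsColEchelon {K : Type*} [Field K] {m n : ℕ}
    (C : Matrix (Fin m) (Fin n) K) : Prop :=
  ∃ (r : ℕ) (hr : r ≤ n) (piv : Fin r → Fin m), StrictMono piv ∧
    (∀ j : Fin n, r ≤ (j : ℕ) → ∀ i : Fin m, C i j = 0) ∧
    ∀ j : Fin r, C (piv j) (Fin.castLE hr j) ≠ 0 ∧
      ∀ i : Fin m, (i : ℕ) < (piv j : ℕ) → C i (Fin.castLE hr j) = 0

/-- Block step correctness of the CUP algorithm.  The columns of the `m×n`
matrix `A = [[A1],[A2]]` are indexed by `Fin r1 ⊕ Fin n2` (so `n = r1 + n2`).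
Given `A1 = C1·[U1 V1]·P1` with `C1` of full column rank `r1` in column
echelon form and `U1` unit upper triangular, set `[A21 A22] = A2·P1ᵀ`,
`G = A21·U1⁻¹` and `H = A22 − G·V1`.  If `H = C2·U2·P2` is a CUP decomposition
of `H`, then `A = [[C1,0],[G,C2]] · [[U1, V1·P2ᵀ],[0,U2]] · (diag(I,P2)·P1)`
is a CUP decomposition of `A`. -/

lemma perm_transpose_mul' {K : Type*} [Semiring K] {n : Type*} [DecidableEq n] [Fintype n]
    (σ : Equiv.Perm n) : (σ.permMatrix K)ᵀ * σ.permMatrix K = 1 := by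
  have h : (σ.permMatrix K)ᵀ = (σ.symm.toPEquiv.toMatrix : Matrix n n K) := by
    rw [Equiv.toPEquiv_symm, PEquiv.toMatrix_symm]
  rw [h, Equiv.Perm.permMatrix, PEquiv.toMatrix_toPEquiv_mul]
  ext i j
  simp [PEquiv.toMatrix_apply, Equiv.toPEquiv_apply, Matrix.one_apply, Equiv.eq_symm_apply, eq_comm]

lemma unit_upper_inv_mul {K : Type*} [Field K] {r : ℕ} (U : Matrix (Fin r) (Fin r) K)
    (hdiag : ∀ i, U i i = 1) (htri : ∀ i j : Fin r, (j : ℕ) < (i : ℕ) → U i j = 0) :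
    U⁻¹ * U = 1 := by
  apply Matrix.nonsing_inv_mul
  have hbt : U.BlockTriangular id := fun i j h => htri i j h
  rw [Matrix.det_of_upperTriangular hbt]
  simp [hdiag]

theorem cup_stmt16 {K : Type*} [Field K] {k m2 r1 n2 : ℕ}
    (A1 : Matrix (Fin k) (Fin r1 ⊕ Fin n2) K)
    (A2 : Matrix (Fin m2) (Fin r1 ⊕ Fin n2) K)
    (C1 : Matrix (Fin k) (Fin r1) K)
    (U1 : Matrix (Fin r1) (Fin r1) K)
    (V1 : Matrix (Fin r1) (Fin n2) K)
    (P1 : Matrix (Fin r1 ⊕ Fin n2) (Fin r1 ⊕ Fin n2) K)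
    (σ1 : Equiv.Perm (Fin r1 ⊕ Fin n2)) (hP1 : P1 = σ1.permMatrix K)
    (piv1 : Fin r1 → Fin k) (hpiv1 : StrictMono piv1)
    (hC1piv : ∀ j : Fin r1, C1 (piv1 j) j ≠ 0)
    (hC1above : ∀ j : Fin r1, ∀ i : Fin k, (i : ℕ) < (piv1 j : ℕ) → C1 i j = 0)
    (hU1diag : ∀ i : Fin r1, U1 i i = 1)
    (hU1tri : ∀ i j : Fin r1, (j : ℕ) < (i : ℕ) → U1 i j = 0)
    (hA1 : A1 = C1 * fromCols U1 V1 * P1)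
    (G : Matrix (Fin m2) (Fin r1) K)
    (hG : G = (A2 * P1ᵀ).toCols₁ * U1⁻¹)
    (H : Matrix (Fin m2) (Fin n2) K)
    (hH : H = (A2 * P1ᵀ).toCols₂ - G * V1)
    (C2 : Matrix (Fin m2) (Fin n2) K) (hC2 : IsColEchelon C2)
    (U2 : Matrix (Fin n2) (Fin n2) K)
    (hU2diag : ∀ i : Fin n2, U2 i i = 1)
    (hU2tri : ∀ i j : Fin n2, (j : ℕ) < (i : ℕ) → U2 i j = 0)
    (P2 : Matrix (Fin n2) (Fin n2) K)
    (σ2 : Equiv.Perm (Fin n2)) (hP2 : P2 = σ2.permMatrix K)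
    (hHdec : H = C2 * U2 * P2) :
    fromRows A1 A2 =
      fromBlocks C1 0 G C2 * fromBlocks U1 (V1 * P2ᵀ) 0 U2 *
        (fromBlocks 1 0 0 P2 * P1) := by
  have hU1inv : U1⁻¹ * U1 = 1 := unit_upper_inv_mul U1 hU1diag hU1tri
  have hP1i : P1ᵀ * P1 = 1 := by rw [hP1]; exact perm_transpose_mul' σ1
  have hP2i : P2ᵀ * P2 = 1 := by rw [hP2]; exact perm_transpose_mul' σ2
  set A21 := (A2 * P1ᵀ).toCols₁ with hA21
  set A22 := (A2 * P1ᵀ).toCols₂ with hA22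
  have hGU : G * U1 = A21 := by rw [hG, Matrix.mul_assoc, hU1inv, Matrix.mul_one]
  have hA2 : A2 = fromCols A21 A22 * P1 := by
    rw [hA21, hA22, fromCols_toCols, Matrix.mul_assoc, hP1i, Matrix.mul_one]
  have key : fromBlocks C1 0 G C2 * fromBlocks U1 (V1 * P2ᵀ) 0 U2 * fromBlocks 1 0 0 P2
      = fromBlocks (C1 * U1) (C1 * V1) A21 A22 := by
    have h12 : C1 * (V1 * P2ᵀ) * P2 = C1 * V1 := by
      rw [Matrix.mul_assoc C1, Matrix.mul_assoc V1, hP2i, Matrix.mul_one]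
    have h22 : (G * (V1 * P2ᵀ) + C2 * U2) * P2 = A22 := by
      rw [Matrix.add_mul, Matrix.mul_assoc G, Matrix.mul_assoc V1, hP2i, Matrix.mul_one,
        ← hHdec, hH]
      abel
    rw [Matrix.fromBlocks_multiply]; erw [Matrix.fromBlocks_multiply]
    simp only [Matrix.zero_mul, Matrix.mul_zero, add_zero, zero_add, Matrix.mul_one,
      Matrix.one_mul, h12, h22, hGU]
  calc fromRows A1 A2
      = fromRows (C1 * fromCols U1 V1 * P1) (fromCols A21 A22 * P1) := by
        rw [← hA1, ← hA2]
    _ = fromBlocks (C1 * U1) (C1 * V1) A21 A22 * P1 := by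
        rw [mul_fromCols, ← Matrix.fromRows_mul, fromRows_fromCols_eq_fromBlocks]
    _ = _ := by rw [← key]; erw [Matrix.mul_assoc, Matrix.mul_assoc]
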